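/- Fix an integer T ≥ 1 and reals 0 < a ≤ b. Let c_{0,t}, c_{1,t} ∈ [a,b] for t = 1,…,T, let S_t ≥ 0 and I_0 ≥ 0 be reals, and let A₁ = { t : c_{1,t} < √(a/b)·c_{0,t} }. Let m_{1,t} ≥ 0 be an FDC plan with remaining inventory I_t = I_0 − Σ_{τ=1}^{t} m_{1,τ}, define m̂_{1,t} = min{S_t, I_{t−1}} if t ∈ A₁ and m̂_{1,t} = 0 otherwise, and m̂_{0,t} = S_t − m̂_{1,t}; suppose for every t either m_{1,t} = m̂_{1,t} or m_{1,t} = 0. Let m*_{1,t} ∈ [0, S_t] with Σ_{t=1}^{T} m*_{1,t} ≤ I_0, and set m*_{0,t} = S_t − m*_{1,t}. Then for every set B with { t : m_{1,t} > 0 } ⊆ B ⊆ {1,…,T}, Σ_{t∈B} ( c_{0,t}·m̂_{0,t} + c_{1,t}·m̂_{1,t} ) ≤ √(b/a) · Σ_{t∈B} ( c_{0,t}·m*_{0,t} + c_{1,t}·m*_{1,t} ). -/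

import Mathlib

open Finset

/-- Claim 3 (adjusted-variable-cost comparison, single FDC, time-varying costs):
for any set `B` of periods containing all periods in which the gated plan uses the FDC,
the total variable cost of the adjusted-priority greedy quantities is at most
`√(b/a)` times that of any feasible offline plan. -/
theorem adjusted_greedy_variable_cost_le_sqrt_offline
    (T : ℕ) (hT : 1 ≤ T)
    (a b : ℝ) (ha : 0 < a) (hab : a ≤ b)
    (c0 c1 : ℕ → ℝ)
    (hc0 : ∀ t ∈ Icc 1 T, a ≤ c0 t ∧ c0 t ≤ b)
    (hc1 : ∀ t ∈ Icc 1 T, a ≤ c1 t ∧ c1 t ≤ b)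
    (S : ℕ → ℝ) (hS : ∀ t ∈ Icc 1 T, 0 ≤ S t)
    (I0 : ℝ) (hI0 : 0 ≤ I0)
    (m1 : ℕ → ℝ) (hm1 : ∀ t ∈ Icc 1 T, 0 ≤ m1 t)
    (I : ℕ → ℝ) (hI : ∀ t : ℕ, I t = I0 - ∑ τ ∈ Icc 1 t, m1 τ)
    (mhat1 mhat0 : ℕ → ℝ)
    (hmhat1 : ∀ t ∈ Icc 1 T,
      mhat1 t = if c1 t < Real.sqrt (a / b) * c0 t then min (S t) (I (t - 1)) else 0)
    (hmhat0 : ∀ t ∈ Icc 1 T, mhat0 t = S t - mhat1 t)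
    (hgated : ∀ t ∈ Icc 1 T, m1 t = mhat1 t ∨ m1 t = 0)
    (mstar1 : ℕ → ℝ)
    (hmstar1 : ∀ t ∈ Icc 1 T, 0 ≤ mstar1 t ∧ mstar1 t ≤ S t)
    (hmstar_inv : ∑ t ∈ Icc 1 T, mstar1 t ≤ I0)
    (B : Finset ℕ)
    (hCB : (Icc 1 T).filter (fun t => 0 < m1 t) ⊆ B)
    (hBT : B ⊆ Icc 1 T) :
    ∑ t ∈ B, (c0 t * mhat0 t + c1 t * mhat1 t)
      ≤ Real.sqrt (b / a) *
          ∑ t ∈ B, (c0 t * (S t - mstar1 t) + c1 t * mstar1 t) := by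
  classical
  have hb : 0 < b := lt_of_lt_of_le ha hab
  set sa := Real.sqrt a with hsa_def
  set sb := Real.sqrt b with hsb_def
  have hsa : 0 < sa := Real.sqrt_pos.mpr ha
  have hsb : 0 < sb := Real.sqrt_pos.mpr hb
  have hsa2 : sa ^ 2 = a := Real.sq_sqrt ha.le
  have hsb2 : sb ^ 2 = b := Real.sq_sqrt hb.le
  have hsab : sa ≤ sb := Real.sqrt_le_sqrt hab
  have hrdef : Real.sqrt (b / a) = sb / sa := Real.sqrt_div hb.le a
  have hsdef : Real.sqrt (a / b) = sa / sb := Real.sqrt_div ha.le b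
  -- inventory nonnegativity
  have hI0' : I 0 = I0 := by
    rw [hI]; simp
  have hInn : ∀ t, t ≤ T → 0 ≤ I t := by
    intro t
    induction t with
    | zero => intro _; rw [hI0']; exact hI0
    | succ n ih =>
      intro hn
      have h0 := ih (Nat.le_of_succ_le hn)
      have hmem : n + 1 ∈ Icc 1 T := by simp [Finset.mem_Icc]; omega
      have hstep : I (n + 1) = I n - m1 (n + 1) := by
        rw [hI, hI, Finset.sum_Icc_succ_top (by omega : 1 ≤ n + 1)]; ring
      have hle : m1 (n + 1) ≤ I n := by
        rcases hgated (n + 1) hmem with h | h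
        · rw [h, hmhat1 (n + 1) hmem]
          split
          · simpa using min_le_right (S (n + 1)) (I n)
          · exact h0
        · rw [h]; exact h0
      linarith
  -- bounds on mhat1
  have hmhb : ∀ t ∈ Icc 1 T, 0 ≤ mhat1 t ∧ mhat1 t ≤ S t := by
    intro t ht
    have ht' : 1 ≤ t ∧ t ≤ T := by simpa [Finset.mem_Icc] using ht
    have hInn' : 0 ≤ I (t - 1) := hInn (t - 1) (by omega)
    rw [hmhat1 t ht]
    split
    · exact ⟨le_min (hS t ht) hInn', min_le_left _ _⟩
    · exact ⟨le_rfl, hS t ht⟩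
  -- m1 ≤ mhat1 on Icc
  have hm1le : ∀ t ∈ Icc 1 T, m1 t ≤ mhat1 t := by
    intro t ht
    rcases hgated t ht with h | h
    · rw [h]
    · rw [h]; exact (hmhb t ht).1
  set A : Finset ℕ := B.filter (fun t => c1 t < Real.sqrt (a / b) * c0 t) with hA_def
  have hAB : A ⊆ B := Finset.filter_subset _ _
  have hAT : A ⊆ Icc 1 T := fun t ht => hBT (hAB ht)
  -- key aggregate inequality
  have key : ∑ t ∈ A, mstar1 t ≤ ∑ t ∈ A, mhat1 t := by
    by_cases hshort : ∃ t ∈ A, I (t - 1) < S t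
    · obtain ⟨t0, ht0A, ht0s⟩ := hshort
      have ht0T : t0 ∈ Icc 1 T := hAT ht0A
      have ht0' : 1 ≤ t0 ∧ t0 ≤ T := by simpa [Finset.mem_Icc] using ht0T
      have hcond : c1 t0 < Real.sqrt (a / b) * c0 t0 := (Finset.mem_filter.mp ht0A).2
      have hmt0 : mhat1 t0 = I (t0 - 1) := by
        rw [hmhat1 t0 ht0T, if_pos hcond, min_eq_right ht0s.le]
      set A' : Finset ℕ := A.filter (fun τ => τ ≤ t0) with hA'_def
      have ht0A' : t0 ∈ A' := Finset.mem_filter.mpr ⟨ht0A, le_rfl⟩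
      have h1 : ∑ t ∈ A', mhat1 t ≤ ∑ t ∈ A, mhat1 t :=
        Finset.sum_le_sum_of_subset_of_nonneg (Finset.filter_subset _ _)
          (fun t ht _ => (hmhb t (hAT ht)).1)
      have h2 : mhat1 t0 + ∑ t ∈ A'.erase t0, mhat1 t = ∑ t ∈ A', mhat1 t :=
        Finset.add_sum_erase _ _ ht0A'
      -- sum of m1 over Icc 1 (t0-1) is at most sum of mhat1 over erased set
      have h3 : ∑ τ ∈ Icc 1 (t0 - 1), m1 τ ≤ ∑ t ∈ A'.erase t0, mhat1 t := by
        have hzero : ∀ τ ∈ Icc 1 (t0 - 1), m1 τ ≠ 0 → τ ∈ A := by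
          intro τ hτ hne
          have hτ' : 1 ≤ τ ∧ τ ≤ t0 - 1 := by simpa [Finset.mem_Icc] using hτ
          have hτT : τ ∈ Icc 1 T := by simp [Finset.mem_Icc]; omega
          have hpos : 0 < m1 τ := lt_of_le_of_ne (hm1 τ hτT) (Ne.symm hne)
          have hτB : τ ∈ B := hCB (Finset.mem_filter.mpr ⟨hτT, hpos⟩)
          have hmeq : m1 τ = mhat1 τ := by
            rcases hgated τ hτT with h | h
            · exact h
            · exact absurd h hpos.ne'
          have hcτ : c1 τ < Real.sqrt (a / b) * c0 τ := by
            by_contra hcc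
            rw [hmhat1 τ hτT, if_neg hcc] at hmeq
            exact hne hmeq
          exact Finset.mem_filter.mpr ⟨hτB, hcτ⟩
        have e1 : ∑ τ ∈ (Icc 1 (t0 - 1)).filter (fun τ => τ ∈ A), m1 τ
            = ∑ τ ∈ Icc 1 (t0 - 1), m1 τ := Finset.sum_filter_of_ne hzero
        have hsub : (Icc 1 (t0 - 1)).filter (fun τ => τ ∈ A) ⊆ A'.erase t0 := by
          intro τ hτ
          obtain ⟨hτI, hτA⟩ := Finset.mem_filter.mp hτ
          have hτ' : 1 ≤ τ ∧ τ ≤ t0 - 1 := by simpa [Finset.mem_Icc] using hτI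
          refine Finset.mem_erase.mpr ⟨by omega, Finset.mem_filter.mpr ⟨hτA, by omega⟩⟩
        calc ∑ τ ∈ Icc 1 (t0 - 1), m1 τ
            = ∑ τ ∈ (Icc 1 (t0 - 1)).filter (fun τ => τ ∈ A), m1 τ := e1.symm
          _ ≤ ∑ τ ∈ A'.erase t0, m1 τ :=
              Finset.sum_le_sum_of_subset_of_nonneg hsub (fun τ hτ _ =>
                hm1 τ (hAT ((Finset.filter_subset _ _) ((Finset.erase_subset _ _) hτ))))
          _ ≤ ∑ t ∈ A'.erase t0, mhat1 t :=
              Finset.sum_le_sum (fun τ hτ =>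
                hm1le τ (hAT ((Finset.filter_subset _ _) ((Finset.erase_subset _ _) hτ))))
      have hIeq : ∑ τ ∈ Icc 1 (t0 - 1), m1 τ = I0 - I (t0 - 1) := by
        rw [hI (t0 - 1)]; ring
      have hstar : ∑ t ∈ A, mstar1 t ≤ I0 := by
        refine le_trans ?_ hmstar_inv
        exact Finset.sum_le_sum_of_subset_of_nonneg hAT
          (fun t ht _ => (hmstar1 t ht).1)
      calc ∑ t ∈ A, mstar1 t ≤ I0 := hstar
        _ = I (t0 - 1) + (I0 - I (t0 - 1)) := by ring
        _ ≤ mhat1 t0 + ∑ t ∈ A'.erase t0, mhat1 t := by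
            rw [hmt0, ← hIeq]; linarith
        _ = ∑ t ∈ A', mhat1 t := h2
        _ ≤ ∑ t ∈ A, mhat1 t := h1
    · push_neg at hshort
      refine Finset.sum_le_sum (fun t ht => ?_)
      have htT : t ∈ Icc 1 T := hAT ht
      have hcond : c1 t < Real.sqrt (a / b) * c0 t := (Finset.mem_filter.mp ht).2
      have : mhat1 t = S t := by
        rw [hmhat1 t htT, if_pos hcond, min_eq_left (hshort t ht)]
      rw [this]; exact (hmstar1 t htT).2
  -- pointwise facts helper
  have hfacts : ∀ t ∈ B, a ≤ c0 t ∧ c0 t ≤ b ∧ a ≤ c1 t ∧ c1 t ≤ b ∧ 0 ≤ S t ∧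
      0 ≤ mstar1 t ∧ mstar1 t ≤ S t ∧ 0 ≤ mhat1 t ∧ mhat1 t ≤ S t ∧
      mhat0 t = S t - mhat1 t := by
    intro t ht
    have htT := hBT ht
    exact ⟨(hc0 t htT).1, (hc0 t htT).2, (hc1 t htT).1, (hc1 t htT).2, hS t htT,
      (hmstar1 t htT).1, (hmstar1 t htT).2, (hmhb t htT).1, (hmhb t htT).2,
      hmhat0 t htT⟩
  set r : ℝ := Real.sqrt (b / a) with hr_def
  have hr : r = sb / sa := hrdef
  have hrsa : r * sa = sb := by rw [hr]; field_simp
  -- part on A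
  have partA : ∑ t ∈ A, (c0 t * mhat0 t + c1 t * mhat1 t)
      ≤ ∑ t ∈ A, (r * (c0 t * (S t - mstar1 t) + c1 t * mstar1 t)) := by
    have stepU : ∑ t ∈ A, (c0 t * mhat0 t + c1 t * mhat1 t)
        ≤ ∑ t ∈ A, (sa * sb * mhat1 t + b * (S t - mhat1 t)) := by
      refine Finset.sum_le_sum (fun t ht => ?_)
      obtain ⟨h1, h2, h3, h4, h5, h6, h7, h8, h9, h10⟩ := hfacts t (hAB ht)
      have hcond : c1 t < Real.sqrt (a / b) * c0 t := (Finset.mem_filter.mp ht).2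
      rw [hsdef] at hcond
      have hc1q : c1 t ≤ sa * sb := by
        have : sa / sb * c0 t ≤ sa / sb * b :=
          mul_le_mul_of_nonneg_left h2 (by positivity)
        have hq : sa / sb * b = sa * sb := by
          rw [← hsb2]; field_simp
        linarith
      rw [h10]
      calc c0 t * (S t - mhat1 t) + c1 t * mhat1 t
          ≤ b * (S t - mhat1 t) + sa * sb * mhat1 t := by
            have u1 := mul_le_mul_of_nonneg_right h2
              (by linarith : (0:ℝ) ≤ S t - mhat1 t)
            have u2 := mul_le_mul_of_nonneg_right hc1q h8
            linarith
        _ = sa * sb * mhat1 t + b * (S t - mhat1 t) := by ring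
    have stepM : ∑ t ∈ A, (sa * sb * mhat1 t + b * (S t - mhat1 t))
        ≤ ∑ t ∈ A, (sa * sb * mstar1 t + b * (S t - mstar1 t)) := by
      have expand : ∀ f : ℕ → ℝ, ∑ t ∈ A, (sa * sb * f t + b * (S t - f t))
          = b * ∑ t ∈ A, S t - (b - sa * sb) * ∑ t ∈ A, f t := by
        intro f
        rw [Finset.mul_sum, Finset.mul_sum, ← Finset.sum_sub_distrib]
        exact Finset.sum_congr rfl (fun t _ => by ring)
      rw [expand, expand]
      have hcoef : 0 ≤ b - sa * sb := by nlinarith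
      linarith [mul_le_mul_of_nonneg_left key hcoef]
    have stepL : ∑ t ∈ A, (sa * sb * mstar1 t + b * (S t - mstar1 t))
        ≤ ∑ t ∈ A, (r * (c0 t * (S t - mstar1 t) + c1 t * mstar1 t)) := by
      refine Finset.sum_le_sum (fun t ht => ?_)
      obtain ⟨h1, h2, h3, h4, h5, h6, h7, h8, h9, h10⟩ := hfacts t (hAB ht)
      have hcond : c1 t < Real.sqrt (a / b) * c0 t := (Finset.mem_filter.mp ht).2
      rw [hsdef] at hcond
      have hcond' : sb * c1 t < sa * c0 t := by
        rw [div_mul_eq_mul_div, lt_div_iff₀ hsb] at hcond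
        calc sb * c1 t = c1 t * sb := mul_comm _ _
          _ < sa * c0 t := hcond
      have hrc1 : sa * sb ≤ r * c1 t := by
        have h' : sa * (sa * sb) ≤ sa * (r * c1 t) := by
          calc sa * (sa * sb) = sb * a := by rw [← hsa2]; ring
            _ ≤ sb * c1 t := mul_le_mul_of_nonneg_left h3 hsb.le
            _ = sa * (r * c1 t) := by rw [← hrsa]; ring
        exact le_of_mul_le_mul_left h' hsa
      have hc0lb : sa * sb ≤ c0 t := by
        have h' : sa * (sa * sb) ≤ sa * c0 t := by
          calc sa * (sa * sb) = sb * a := by rw [← hsa2]; ring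
            _ ≤ sb * c1 t := mul_le_mul_of_nonneg_left h3 hsb.le
            _ ≤ sa * c0 t := hcond'.le
        exact le_of_mul_le_mul_left h' hsa
      have hrc0 : b ≤ r * c0 t := by
        have h' : sa * b ≤ sa * (r * c0 t) := by
          calc sa * b = sb * (sa * sb) := by rw [← hsb2]; ring
            _ ≤ sb * c0 t := mul_le_mul_of_nonneg_left hc0lb hsb.le
            _ = sa * (r * c0 t) := by rw [← hrsa]; ring
        exact le_of_mul_le_mul_left h' hsa
      calc sa * sb * mstar1 t + b * (S t - mstar1 t)
          ≤ r * c1 t * mstar1 t + r * c0 t * (S t - mstar1 t) := by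
            have u1 := mul_le_mul_of_nonneg_right hrc0
              (by linarith : (0:ℝ) ≤ S t - mstar1 t)
            have u2 := mul_le_mul_of_nonneg_right hrc1 h6
            linarith
        _ = r * (c0 t * (S t - mstar1 t) + c1 t * mstar1 t) := by ring
    linarith
  -- part off A
  have partNA : ∑ t ∈ B.filter (fun t => ¬ c1 t < Real.sqrt (a / b) * c0 t),
        (c0 t * mhat0 t + c1 t * mhat1 t)
      ≤ ∑ t ∈ B.filter (fun t => ¬ c1 t < Real.sqrt (a / b) * c0 t),
        (r * (c0 t * (S t - mstar1 t) + c1 t * mstar1 t)) := by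
    refine Finset.sum_le_sum (fun t ht => ?_)
    obtain ⟨htB, hcond⟩ := Finset.mem_filter.mp ht
    obtain ⟨h1, h2, h3, h4, h5, h6, h7, h8, h9, h10⟩ := hfacts t htB
    have hm0 : mhat1 t = 0 := by rw [hmhat1 t (hBT htB), if_neg hcond]
    push_neg at hcond
    rw [hsdef] at hcond
    have hcond' : sa * c0 t ≤ sb * c1 t := by
      rw [div_mul_eq_mul_div, div_le_iff₀ hsb] at hcond
      calc sa * c0 t ≤ c1 t * sb := hcond
        _ = sb * c1 t := mul_comm _ _
    have hrc1 : c0 t ≤ r * c1 t := by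
      have h' : sa * c0 t ≤ sa * (r * c1 t) := by
        calc sa * c0 t ≤ sb * c1 t := hcond'
          _ = sa * (r * c1 t) := by rw [← hrsa]; ring
      exact le_of_mul_le_mul_left h' hsa
    have hrc0 : c0 t ≤ r * c0 t := by
      have h' : sa * c0 t ≤ sa * (r * c0 t) := by
        calc sa * c0 t ≤ sb * c0 t :=
              mul_le_mul_of_nonneg_right hsab (by linarith)
          _ = sa * (r * c0 t) := by rw [← hrsa]; ring
      exact le_of_mul_le_mul_left h' hsa
    rw [h10, hm0]
    calc c0 t * (S t - 0) + c1 t * 0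
        = c0 t * (S t - mstar1 t) + c0 t * mstar1 t := by ring
      _ ≤ r * c0 t * (S t - mstar1 t) + r * c1 t * mstar1 t := by
          have u1 := mul_le_mul_of_nonneg_right hrc0
            (by linarith : (0:ℝ) ≤ S t - mstar1 t)
          have u2 := mul_le_mul_of_nonneg_right hrc1 h6
          linarith
      _ = r * (c0 t * (S t - mstar1 t) + c1 t * mstar1 t) := by ring
  calc ∑ t ∈ B, (c0 t * mhat0 t + c1 t * mhat1 t)
      = ∑ t ∈ A, (c0 t * mhat0 t + c1 t * mhat1 t)
        + ∑ t ∈ B.filter (fun t => ¬ c1 t < Real.sqrt (a / b) * c0 t),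
            (c0 t * mhat0 t + c1 t * mhat1 t) := by
        rw [hA_def, Finset.sum_filter_add_sum_filter_not]
    _ ≤ ∑ t ∈ A, (r * (c0 t * (S t - mstar1 t) + c1 t * mstar1 t))
        + ∑ t ∈ B.filter (fun t => ¬ c1 t < Real.sqrt (a / b) * c0 t),
            (r * (c0 t * (S t - mstar1 t) + c1 t * mstar1 t)) :=
        add_le_add partA partNA
    _ = ∑ t ∈ B, (r * (c0 t * (S t - mstar1 t) + c1 t * mstar1 t)) := by
        rw [hA_def, Finset.sum_filter_add_sum_filter_not]
    _ = r * ∑ t ∈ B, (c0 t * (S t - mstar1 t) + c1 t * mstar1 t) := by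
        rw [Finset.mul_sum]
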